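/- Let Ḡ be an algebraic monoid with zero over a field k, with unit group G, and let X = Spec(A) be an affine G-scheme. Then the Białynicki-Birula functor X⁺ is represented by a closed subscheme of X, namely Spec(A/I) where I ⊆ A is the ideal generated by the kernel 𝒢 of the universal quotient Ḡ-representation A → A/𝒢. -/

import Mathlib

/-!
Algebraic core: affine algebraic monoids over a field `k` encoded via their
coordinate (commutative) bialgebras, with the functor of points on commutative
`k`-algebras; actions on affine schemes via coactions on coordinate rings.
-/

open TensorProduct

noncomputable section

namespace BBAlg

variable (k : Type) [Field k]

/-- The algebraic closure of `k`. -/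
abbrev Kb := AlgebraicClosure k

variable (H : Type) [CommRing H] [Bialgebra k H]

/-- The convolution product of two `R`-points of `Spec H`, i.e. the product of
points in the monoid scheme `Spec H`. -/
def conv {R : Type} [CommRing R] [Algebra k R] (x y : H →ₐ[k] R) : H →ₐ[k] R :=
  (Algebra.TensorProduct.lmul' k).comp
    ((Algebra.TensorProduct.map x y).comp (Bialgebra.comulAlgHom k H))

/-- The identity `R`-point of the monoid scheme `Spec H`. -/
def onePt (R : Type) [CommRing R] [Algebra k R] : H →ₐ[k] R :=
  (Algebra.ofId k R).comp (Bialgebra.counitAlgHom k H)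

/-- `Spec H` is a geometrically integral affine variety over `k`. -/
structure IsAffAlgVariety : Prop where
  finiteType : Algebra.FiniteType k H
  geomIntegral : IsDomain (Kb k ⊗[k] H)

/-- A zero element for the monoid scheme `Spec H`: an absorbing `k`-point. -/
structure ZeroPt where
  z : H →ₐ[k] k
  absorb_left : ∀ (R : Type) [CommRing R] [Algebra k R] (x : H →ₐ[k] R),
    conv k H ((Algebra.ofId k R).comp z) x = (Algebra.ofId k R).comp z
  absorb_right : ∀ (R : Type) [CommRing R] [Algebra k R] (x : H →ₐ[k] R),
    conv k H x ((Algebra.ofId k R).comp z) = (Algebra.ofId k R).comp z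

variable (L : Type) [CommRing L] [HopfAlgebra k L]

/-- The unit group of the affine monoid `Spec H`: a Hopf algebra `L` with a
bialgebra map `φ : H →ₐ L` inducing an open immersion `Spec L ↪ Spec H` whose
points are exactly the invertible points of `Spec H`. -/
structure UnitGroupAlg where
  φ : H →ₐ[k] L
  comul_compat : (Algebra.TensorProduct.map φ φ).comp (Bialgebra.comulAlgHom k H) =
    (Bialgebra.comulAlgHom k L).comp φ
  counit_compat : (Bialgebra.counitAlgHom k L).comp φ = Bialgebra.counitAlgHom k H
  openImmersion :
    AlgebraicGeometry.IsOpenImmersion (AlgebraicGeometry.Spec.map (CommRingCat.ofHom φ.toRingHom))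
  units_iff : ∀ (R : Type) [CommRing R] [Algebra k R] (x : H →ₐ[k] R),
    (∃ y : H →ₐ[k] R, conv k H x y = onePt k H R ∧ conv k H y x = onePt k H R) ↔
      ∃ xt : L →ₐ[k] R, xt.comp φ = x

/-- A Kempf structure on the affine algebraic monoid `Spec H` with zero `z0`
and unit group `Spec L`: a central one-parameter subgroup `𝔾ₘ,k̄ → Z(G)` whose
induced map to `Spec H ⊗ k̄` extends to the affine line sending `0` to the zero
point.  It is encoded via the functor of points on (`k̄`-)algebras: the
`R`-points of `𝔸¹_k̄` are the elements of `R`, the `R`-points of `𝔾ₘ,k̄` are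
the units of `R`. -/
structure KempfAlg (U : UnitGroupAlg k H L) (z0 : ZeroPt k H) where
  κ : ∀ (R : Type) [CommRing R] [Algebra k R] [Algebra (Kb k) R]
    [IsScalarTower k (Kb k) R], R → (H →ₐ[k] R)
  κ_natural : ∀ (R R' : Type) [CommRing R] [Algebra k R] [Algebra (Kb k) R]
    [IsScalarTower k (Kb k) R] [CommRing R'] [Algebra k R'] [Algebra (Kb k) R']
    [IsScalarTower k (Kb k) R'] (f : R →ₐ[Kb k] R') (s : R),
    κ R' (f s) = (f.restrictScalars k).comp (κ R s)
  κ_one : ∀ (R : Type) [CommRing R] [Algebra k R] [Algebra (Kb k) R]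
    [IsScalarTower k (Kb k) R], κ R 1 = onePt k H R
  κ_zero : ∀ (R : Type) [CommRing R] [Algebra k R] [Algebra (Kb k) R]
    [IsScalarTower k (Kb k) R], κ R 0 = (Algebra.ofId k R).comp z0.z
  κ_mul : ∀ (R : Type) [CommRing R] [Algebra k R] [Algebra (Kb k) R]
    [IsScalarTower k (Kb k) R] (s t : R), IsUnit s → IsUnit t →
    κ R (s * t) = conv k H (κ R s) (κ R t)
  κ_unit : ∀ (R : Type) [CommRing R] [Algebra k R] [Algebra (Kb k) R]
    [IsScalarTower k (Kb k) R] (s : R), IsUnit s →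
    ∃ xt : L →ₐ[k] R, xt.comp U.φ = κ R s
  κ_central : ∀ (R : Type) [CommRing R] [Algebra k R] [Algebra (Kb k) R]
    [IsScalarTower k (Kb k) R] (s : R), IsUnit s → ∀ y : L →ₐ[k] R,
    conv k H (κ R s) (y.comp U.φ) = conv k H (y.comp U.φ) (κ R s)

/-- A coaction of the bialgebra `H` on a commutative `k`-algebra `A`, i.e. an
action of the affine monoid scheme `Spec H` on `Spec A`. -/
structure CoactionOn (A : Type) [CommRing A] [Algebra k A] where
  ρ : A →ₐ[k] H ⊗[k] A
  counit : ∀ a : A,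
    (TensorProduct.map (Bialgebra.counitAlgHom k H).toLinearMap LinearMap.id) (ρ a) =
      (1 : k) ⊗ₜ[k] a
  coassoc : ∀ a : A,
    (TensorProduct.assoc k H H A) ((TensorProduct.map Coalgebra.comul LinearMap.id) (ρ a)) =
      (TensorProduct.map LinearMap.id ρ.toLinearMap) (ρ a)

/-- The action of an `R`-point `g` of `Spec H` on an `R`-point `x` of `Spec A`,
for a coaction `ρ`. -/
def actPt {A : Type} [CommRing A] [Algebra k A] {R : Type} [CommRing R]
    [Algebra k R] (ρ : A →ₐ[k] H ⊗[k] A) (g : H →ₐ[k] R) (x : A →ₐ[k] R) :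
    A →ₐ[k] R :=
  (Algebra.TensorProduct.lmul' k).comp ((Algebra.TensorProduct.map g x).comp ρ)

end BBAlg

namespace BBAlg

open TensorProduct

variable (k : Type) [Field k]

/-- `ρ` is a comodule structure over the coalgebra underlying `C`. -/
def IsLinCoaction (C : Type) [CommRing C] [Bialgebra k C] {V : Type}
    [AddCommGroup V] [Module k V] (ρ : V →ₗ[k] C ⊗[k] V) : Prop :=
  (∀ v : V,
    (TensorProduct.map (Bialgebra.counitAlgHom k C).toLinearMap LinearMap.id) (ρ v) =
      (1 : k) ⊗ₜ[k] v) ∧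
  (∀ v : V,
    (TensorProduct.assoc k C C V) ((TensorProduct.map Coalgebra.comul LinearMap.id) (ρ v)) =
      (TensorProduct.map LinearMap.id ρ) (ρ v))

/-- The subspace `C ⊗ W ⊆ C ⊗ V` for a subspace `W ⊆ V`. -/
def tensSub (C : Type) [AddCommGroup C] [Module k C] {V : Type} [AddCommGroup V]
    [Module k V] (W : Submodule k V) : Submodule k (C ⊗[k] V) :=
  LinearMap.range (TensorProduct.map (LinearMap.id : C →ₗ[k] C) W.subtype)

variable (H : Type) [CommRing H] [Bialgebra k H]
variable (L : Type) [CommRing L] [HopfAlgebra k L] (U : UnitGroupAlg k H L)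

/-- The left-translation coaction of the unit group `G = Spec L` on the monoid
`Ḡ = Spec H` itself, `H → L ⊗ H`. -/
def leftTransCoact : H →ₗ[k] L ⊗[k] H :=
  (TensorProduct.map U.φ.toLinearMap LinearMap.id).comp Coalgebra.comul

variable {A : Type} [CommRing A] [Algebra k A]
variable {C : Type} [CommRing C] [Algebra k C]

/-- A `T = Spec C`-family of points of `X⁺`, i.e. a morphism
`Ḡ × Spec C ⟶ X = Spec A`, is `G`-equivariant (for the left `G`-action on
`Ḡ` and the given `G`-action `σ` on `X`). -/
def IsEquivFamily (σ : A →ₐ[k] L ⊗[k] A) (ψ : A →ₐ[k] H ⊗[k] C) : Prop :=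
  ∀ a : A,
    (TensorProduct.assoc k L H C)
      ((TensorProduct.map (leftTransCoact k H L U) LinearMap.id) (ψ a)) =
    (TensorProduct.map LinearMap.id ψ.toLinearMap) (σ a)

/-- Evaluation of a family `Ḡ × Spec C ⟶ X` at the unit `1 ∈ Ḡ`. -/
def evalOne (ψ : A →ₐ[k] H ⊗[k] C) : A →ₐ[k] C :=
  (Algebra.TensorProduct.lid k C).toAlgHom.comp
    ((Algebra.TensorProduct.map (Bialgebra.counitAlgHom k H) (AlgHom.id k C)).comp ψ)

end BBAlg

section StatementNineAux
open BBAlg TensorProduct CategoryTheory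

variable {k : Type} [Field k]

lemma aux_rTensor_inj {V W C : Type} [AddCommGroup V] [Module k V] [AddCommGroup W] [Module k W]
    [AddCommGroup C] [Module k C] (f : V →ₗ[k] W) (hf : Function.Injective f) :
    Function.Injective (TensorProduct.map f (LinearMap.id : C →ₗ[k] C)) :=
  Module.Flat.rTensor_preserves_injective_linearMap (M := C) f hf

lemma aux_lTensor_inj {V W C : Type} [AddCommGroup V] [Module k V] [AddCommGroup W] [Module k W]
    [AddCommGroup C] [Module k C] (f : V →ₗ[k] W) (hf : Function.Injective f) :
    Function.Injective (TensorProduct.map (LinearMap.id : C →ₗ[k] C) f) :=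
  Module.Flat.lTensor_preserves_injective_linearMap (M := C) f hf

lemma map_map_apply {M N P M' N' P' : Type} [AddCommGroup M] [Module k M] [AddCommGroup N]
    [Module k N] [AddCommGroup P] [Module k P] [AddCommGroup M'] [Module k M']
    [AddCommGroup N'] [Module k N'] [AddCommGroup P'] [Module k P']
    (f : N →ₗ[k] P) (f' : M →ₗ[k] N) (g : N' →ₗ[k] P') (g' : M' →ₗ[k] N')
    (x : M ⊗[k] M') :
    TensorProduct.map f g (TensorProduct.map f' g' x) =
      TensorProduct.map (f ∘ₗ f') (g ∘ₗ g') x := by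
  rw [TensorProduct.map_comp]; rfl


lemma map_id_fuse {M M' N' P' : Type} [AddCommGroup M] [Module k M] [AddCommGroup M']
    [Module k M'] [AddCommGroup N'] [Module k N'] [AddCommGroup P'] [Module k P']
    (g : N' →ₗ[k] P') (g' : M' →ₗ[k] N') (x : M ⊗[k] M') :
    TensorProduct.map LinearMap.id g (TensorProduct.map LinearMap.id g' x) =
      TensorProduct.map LinearMap.id (g ∘ₗ g') x := by
  rw [map_map_apply, LinearMap.id_comp]

lemma map_exchange {M N M' N' : Type} [AddCommGroup M] [Module k M] [AddCommGroup N]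
    [Module k N] [AddCommGroup M'] [Module k M'] [AddCommGroup N'] [Module k N']
    (f : M →ₗ[k] N) (g : M' →ₗ[k] N') (x : M ⊗[k] M') :
    TensorProduct.map f LinearMap.id (TensorProduct.map LinearMap.id g x) =
      TensorProduct.map LinearMap.id g (TensorProduct.map f LinearMap.id x) := by
  rw [map_map_apply, map_map_apply, LinearMap.comp_id, LinearMap.comp_id,
    LinearMap.id_comp, LinearMap.id_comp]

lemma assoc_nat_right {M N P P' : Type} [AddCommGroup M] [Module k M] [AddCommGroup N]
    [Module k N] [AddCommGroup P] [Module k P] [AddCommGroup P'] [Module k P']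
    (g : P →ₗ[k] P') (x : (M ⊗[k] N) ⊗[k] P) :
    (TensorProduct.assoc k M N P') ((TensorProduct.map LinearMap.id g) x) =
      (TensorProduct.map LinearMap.id (TensorProduct.map LinearMap.id g))
        ((TensorProduct.assoc k M N P) x) := by
  conv_lhs => rw [show (LinearMap.id : M ⊗[k] N →ₗ[k] M ⊗[k] N) =
    TensorProduct.map LinearMap.id LinearMap.id from TensorProduct.map_id.symm]
  rw [← TensorProduct.map_map_assoc]

lemma aux_domain {H : Type} [CommRing H] [Bialgebra k H] (hH : IsAffAlgVariety k H) :
    IsDomain H := by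
  have hdom : IsDomain (Kb k ⊗[k] H) := hH.geomIntegral
  have h0 : Function.Injective (Algebra.linearMap k (Kb k)) := (algebraMap k (Kb k)).injective
  have h1 := aux_rTensor_inj (k := k) (C := H) (Algebra.linearMap k (Kb k)) h0
  have hinj : Function.Injective (Algebra.TensorProduct.includeRight : H →ₐ[k] Kb k ⊗[k] H) := by
    intro x y hxy
    have h2 : TensorProduct.map (Algebra.linearMap k (Kb k)) (LinearMap.id : H →ₗ[k] H)
          ((1 : k) ⊗ₜ[k] x) =
        TensorProduct.map (Algebra.linearMap k (Kb k)) (LinearMap.id : H →ₗ[k] H)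
          ((1 : k) ⊗ₜ[k] y) := by
      simpa using hxy
    have := congrArg (TensorProduct.lid k H) (h1 h2)
    simpa using this
  exact Function.Injective.isDomain
    (Algebra.TensorProduct.includeRight : H →ₐ[k] Kb k ⊗[k] H).toRingHom hinj

lemma aux_phi_injective {H L : Type} [CommRing H] [Bialgebra k H] [CommRing L]
    [HopfAlgebra k L] (hH : IsAffAlgVariety k H) (U : UnitGroupAlg k H L) :
    Function.Injective U.φ := by
  have hdom : IsDomain H := aux_domain hH
  have hL : Nontrivial L := (Bialgebra.counitAlgHom k L).toRingHom.domain_nontrivial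
  obtain ⟨p⟩ : Nonempty (PrimeSpectrum L) := inferInstance
  set f : CommRingCat.of H ⟶ CommRingCat.of L := CommRingCat.ofHom U.φ.toRingHom with hf
  haveI : AlgebraicGeometry.IsOpenImmersion (AlgebraicGeometry.Spec.map f) := U.openImmersion
  have hopen : IsOpen (Set.range (PrimeSpectrum.comap U.φ.toRingHom)) :=
    (AlgebraicGeometry.Spec.map f).isOpenEmbedding.isOpen_range
  have hdense : DenseRange (PrimeSpectrum.comap U.φ.toRingHom) := hopen.dense ⟨_, p, rfl⟩
  have hker := (PrimeSpectrum.denseRange_comap_iff_ker_le_nilRadical U.φ.toRingHom).1 hdense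
  rw [injective_iff_map_eq_zero]
  intro a ha
  have hn : a ∈ nilradical H := hker ha
  exact (mem_nilradical.1 hn).eq_zero


section TensorCalc

variable (k : Type) [Field k]
variable (H : Type) [CommRing H] [Bialgebra k H]
variable (C : Type) [CommRing C] [Algebra k C]

/-- The `H`-comodule structure on `H ⊗ C` given by comultiplication in the left factor. -/
def rhoC : H ⊗[k] C →ₗ[k] H ⊗[k] (H ⊗[k] C) :=
  (TensorProduct.assoc k H H C).toLinearMap ∘ₗ
    (TensorProduct.map Coalgebra.comul LinearMap.id)

/-- Evaluation at the counit, `H ⊗ C →ₗ C`. -/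
def eC : H ⊗[k] C →ₗ[k] C :=
  (Algebra.TensorProduct.lid k C).toLinearMap ∘ₗ
    (TensorProduct.map (Bialgebra.counitAlgHom k H).toLinearMap LinearMap.id)

variable {k H C}

lemma pentagon_apply {M N P Q : Type} [AddCommGroup M] [Module k M] [AddCommGroup N]
    [Module k N] [AddCommGroup P] [Module k P] [AddCommGroup Q] [Module k Q]
    (x : ((M ⊗[k] N) ⊗[k] P) ⊗[k] Q) :
    (TensorProduct.assoc k M N (P ⊗[k] Q))
        ((TensorProduct.assoc k (M ⊗[k] N) P Q) x) =
      (TensorProduct.map LinearMap.id (TensorProduct.assoc k N P Q).toLinearMap)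
        ((TensorProduct.assoc k M (N ⊗[k] P) Q)
          ((TensorProduct.map (TensorProduct.assoc k M N P).toLinearMap LinearMap.id) x)) := by
  have h : (TensorProduct.assoc k M N (P ⊗[k] Q)).toLinearMap ∘ₗ
      (TensorProduct.assoc k (M ⊗[k] N) P Q).toLinearMap =
      (TensorProduct.map LinearMap.id (TensorProduct.assoc k N P Q).toLinearMap) ∘ₗ
        (TensorProduct.assoc k M (N ⊗[k] P) Q).toLinearMap ∘ₗ
        (TensorProduct.map (TensorProduct.assoc k M N P).toLinearMap LinearMap.id) := by
    apply TensorProduct.ext_fourfold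
    intro w x y z
    simp
  exact LinearMap.congr_fun h x

lemma rhoC_counit (w : H ⊗[k] C) :
    (TensorProduct.map (Bialgebra.counitAlgHom k H).toLinearMap LinearMap.id)
        (rhoC k H C w) = (1 : k) ⊗ₜ[k] w := by
  have h : (TensorProduct.map (Bialgebra.counitAlgHom k H).toLinearMap LinearMap.id) ∘ₗ
      rhoC k H C = (TensorProduct.mk k k (H ⊗[k] C)) 1 := by
    apply TensorProduct.ext'
    intro h c
    show (TensorProduct.map (Bialgebra.counitAlgHom k H).toLinearMap LinearMap.id)
        ((TensorProduct.assoc k H H C)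
          ((TensorProduct.map Coalgebra.comul LinearMap.id) (h ⊗ₜ[k] c))) = _
    rw [TensorProduct.map_tmul,
      show (LinearMap.id : H ⊗[k] C →ₗ[k] H ⊗[k] C) =
        TensorProduct.map LinearMap.id LinearMap.id from (TensorProduct.map_id).symm,
      TensorProduct.map_map_assoc, TensorProduct.map_tmul]
    have hc : (TensorProduct.map (Bialgebra.counitAlgHom k H).toLinearMap
        (LinearMap.id : H →ₗ[k] H)) (Coalgebra.comul h) = (1 : k) ⊗ₜ[k] h :=
      Coalgebra.rTensor_counit_comul h
    rw [LinearMap.id_coe, id_eq, hc, TensorProduct.assoc_tmul]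
    rfl
  exact LinearMap.congr_fun h w

lemma rhoC_coassoc (w : H ⊗[k] C) :
    (TensorProduct.assoc k H H (H ⊗[k] C))
        ((TensorProduct.map Coalgebra.comul LinearMap.id) (rhoC k H C w)) =
      (TensorProduct.map LinearMap.id (rhoC k H C)) (rhoC k H C w) := by
  have hmain : (TensorProduct.assoc k H H (H ⊗[k] C)).toLinearMap ∘ₗ
      (TensorProduct.map Coalgebra.comul LinearMap.id) ∘ₗ rhoC k H C =
      (TensorProduct.map LinearMap.id (rhoC k H C)) ∘ₗ rhoC k H C := by
    apply TensorProduct.ext'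
    intro h c
    simp only [LinearMap.comp_apply]
    show (TensorProduct.assoc k H H (H ⊗[k] C))
        ((TensorProduct.map Coalgebra.comul LinearMap.id)
          ((TensorProduct.assoc k H H C)
            ((TensorProduct.map Coalgebra.comul LinearMap.id) (h ⊗ₜ[k] c)))) =
      (TensorProduct.map LinearMap.id (rhoC k H C))
        ((TensorProduct.assoc k H H C)
          ((TensorProduct.map Coalgebra.comul LinearMap.id) (h ⊗ₜ[k] c)))
    rw [TensorProduct.map_tmul, LinearMap.id_coe, id_eq]
    set t := Coalgebra.comul (R := k) h with ht
    have s1 : (TensorProduct.map Coalgebra.comul LinearMap.id)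
        ((TensorProduct.assoc k H H C) (t ⊗ₜ[k] c)) =
        (TensorProduct.assoc k (H ⊗[k] H) H C)
          ((TensorProduct.map (TensorProduct.map Coalgebra.comul LinearMap.id)
            LinearMap.id) (t ⊗ₜ[k] c)) := by
      conv_lhs => rw [show (LinearMap.id : H ⊗[k] C →ₗ[k] H ⊗[k] C) =
        TensorProduct.map LinearMap.id LinearMap.id from (TensorProduct.map_id).symm]
      exact TensorProduct.map_map_assoc _ _ _ _
    rw [s1, TensorProduct.map_tmul, LinearMap.id_coe, id_eq, pentagon_apply,
      TensorProduct.map_tmul, LinearMap.id_coe, id_eq]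
    have hco : (TensorProduct.assoc k H H H).toLinearMap
        ((TensorProduct.map Coalgebra.comul LinearMap.id) t) =
        (TensorProduct.map LinearMap.id Coalgebra.comul) t :=
      Coalgebra.coassoc_apply h
    rw [hco]
    have s2 : ((TensorProduct.map LinearMap.id Coalgebra.comul) t) ⊗ₜ[k] c =
        (TensorProduct.map (TensorProduct.map LinearMap.id Coalgebra.comul)
          LinearMap.id) (t ⊗ₜ[k] c) := by
      rw [TensorProduct.map_tmul]; rfl
    rw [s2, ← TensorProduct.map_map_assoc, map_map_apply, LinearMap.id_comp]
    rfl
  exact LinearMap.congr_fun hmain w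

lemma eC_rhoC (w : H ⊗[k] C) :
    (TensorProduct.map LinearMap.id (eC k H C)) (rhoC k H C w) = w := by
  have hmain : (TensorProduct.map LinearMap.id (eC k H C)) ∘ₗ rhoC k H C = LinearMap.id := by
    apply TensorProduct.ext'
    intro h c
    simp only [LinearMap.comp_apply, LinearMap.id_coe, id_eq]
    show (TensorProduct.map LinearMap.id (eC k H C))
        ((TensorProduct.assoc k H H C)
          ((TensorProduct.map Coalgebra.comul LinearMap.id) (h ⊗ₜ[k] c))) = h ⊗ₜ[k] c
    rw [TensorProduct.map_tmul, LinearMap.id_coe, id_eq]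
    set t := Coalgebra.comul (R := k) h with ht
    have fuse : ∀ y : H ⊗[k] (H ⊗[k] C),
        (TensorProduct.map (LinearMap.id : H →ₗ[k] H)
            (Algebra.TensorProduct.lid k C).toLinearMap)
          ((TensorProduct.map (LinearMap.id : H →ₗ[k] H)
            (TensorProduct.map (Bialgebra.counitAlgHom k H).toLinearMap LinearMap.id)) y) =
        (TensorProduct.map LinearMap.id (eC k H C)) y := fun y => by
      rw [map_map_apply, LinearMap.id_comp]; rfl
    rw [← fuse, TensorProduct.map_map_assoc, TensorProduct.map_tmul, LinearMap.id_coe, id_eq]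
    have hc : (TensorProduct.map (LinearMap.id : H →ₗ[k] H)
        (Bialgebra.counitAlgHom k H).toLinearMap) t = h ⊗ₜ[k] (1 : k) :=
      Coalgebra.lTensor_counit_comul h
    rw [hc, TensorProduct.assoc_tmul, TensorProduct.map_tmul]
    simp
  exact LinearMap.congr_fun hmain w

lemma algMap_eq {A B A' B' : Type} [CommRing A] [Algebra k A] [CommRing B] [Algebra k B]
    [CommRing A'] [Algebra k A'] [CommRing B'] [Algebra k B']
    (f : A →ₐ[k] A') (g : B →ₐ[k] B') (x : A ⊗[k] B) :
    Algebra.TensorProduct.map f g x = TensorProduct.map f.toLinearMap g.toLinearMap x := by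
  induction x using TensorProduct.induction_on with
  | zero => simp
  | tmul a b => simp
  | add u v hu hv => rw [map_add, map_add, hu, hv]

lemma N1 {L : Type} [CommRing L] [HopfAlgebra k L] (U : UnitGroupAlg k H L) (w : H ⊗[k] C) :
    (TensorProduct.assoc k L H C)
        ((TensorProduct.map (leftTransCoact k H L U) LinearMap.id) w) =
      (TensorProduct.map U.φ.toLinearMap LinearMap.id) (rhoC k H C w) := by
  have h : (TensorProduct.assoc k L H C).toLinearMap ∘ₗ
      (TensorProduct.map (leftTransCoact k H L U) LinearMap.id) =
      (TensorProduct.map U.φ.toLinearMap LinearMap.id) ∘ₗ rhoC k H C := by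
    apply TensorProduct.ext'
    intro h c
    simp only [LinearMap.comp_apply]
    show (TensorProduct.assoc k L H C)
        ((TensorProduct.map (leftTransCoact k H L U) LinearMap.id) (h ⊗ₜ[k] c)) =
      (TensorProduct.map U.φ.toLinearMap LinearMap.id)
        ((TensorProduct.assoc k H H C)
          ((TensorProduct.map Coalgebra.comul LinearMap.id) (h ⊗ₜ[k] c)))
    rw [TensorProduct.map_tmul, TensorProduct.map_tmul]
    conv_rhs => rw [show (LinearMap.id : H ⊗[k] C →ₗ[k] H ⊗[k] C) =
      TensorProduct.map LinearMap.id LinearMap.id from (TensorProduct.map_id).symm]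
    rw [TensorProduct.map_map_assoc, TensorProduct.map_tmul]
    rfl
  exact LinearMap.congr_fun h w

end TensorCalc

end StatementNineAux
open BBAlg TensorProduct in
/-- Let `Ḡ = Spec H` be an algebraic monoid with zero over a
field `k` with unit group `G = Spec L`, and let `X = Spec A` be an affine
`G`-scheme.  Let `A ↠ A/𝒢` be the universal quotient `Ḡ`-representation of the
`G`-representation `A` (as in Lemma `statement_8`) and let `I ⊆ A` be the
ideal generated by `𝒢`.  Then `I` is `G`-stable and the Białynicki-Birula
functor `X⁺` is represented by the closed subscheme `Spec (A/I)` of `X`: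
for every (test) `k`-algebra `C`, evaluation at `1` is a bijection between
`G`-equivariant families `Ḡ × Spec C ⟶ X` and morphisms `Spec C ⟶ Spec (A/I)`
(i.e. points `A →ₐ C` killing `I`). -/
theorem statement_9
    (k : Type) [Field k]
    -- the algebraic monoid `Ḡ = Spec H` with zero and unit group `G = Spec L`:
    (H : Type) [CommRing H] [Bialgebra k H] (hH : IsAffAlgVariety k H)
    (z0 : ZeroPt k H)
    (L : Type) [CommRing L] [HopfAlgebra k L] (U : UnitGroupAlg k H L)
    -- an affine `G`-scheme `X = Spec A`:
    (A : Type) [CommRing A] [Algebra k A]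
    (σ : A →ₐ[k] L ⊗[k] A) (hσ : IsLinCoaction k L σ.toLinearMap)
    -- `𝒢` is the kernel of the universal quotient `Ḡ`-representation of `A`
    -- (the `G`-subrepresentation from the universal property of
    -- Lemma `statement_8`):
    (𝒢 : Submodule k A) (h𝒢sub : ∀ v ∈ 𝒢, σ.toLinearMap v ∈ tensSub k L 𝒢)
    (ρW : A ⧸ 𝒢 →ₗ[k] H ⊗[k] (A ⧸ 𝒢)) (hρW : IsLinCoaction k H ρW)
    (hcompat : ∀ v : A,
      (TensorProduct.map U.φ.toLinearMap LinearMap.id) (ρW (𝒢.mkQ v)) =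
        (TensorProduct.map LinearMap.id 𝒢.mkQ) (σ.toLinearMap v))
    (huniv : ∀ (W' : Type) [AddCommGroup W'] [Module k W']
      (ρ' : W' →ₗ[k] H ⊗[k] W'), IsLinCoaction k H ρ' →
      ∀ f : A →ₗ[k] W',
      (∀ v : A,
        (TensorProduct.map LinearMap.id f) (σ.toLinearMap v) =
          (TensorProduct.map U.φ.toLinearMap LinearMap.id) (ρ' (f v))) →
      ∃! g : A ⧸ 𝒢 →ₗ[k] W',
        (∀ x : A ⧸ 𝒢, ρ' (g x) = (TensorProduct.map LinearMap.id g) (ρW x)) ∧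
        g.comp 𝒢.mkQ = f) :
    -- conclusion, with `I` the ideal generated by `𝒢`:
    (∀ a : A, a ∈ Ideal.span (𝒢 : Set A) →
        σ.toLinearMap a ∈ tensSub k L ((Ideal.span (𝒢 : Set A)).restrictScalars k)) ∧
    (∀ (C : Type) [CommRing C] [Algebra k C],
      (∀ ψ : A →ₐ[k] H ⊗[k] C, IsEquivFamily k H L U σ ψ →
        Ideal.span (𝒢 : Set A) ≤ RingHom.ker (evalOne k H ψ)) ∧
      (∀ χ : A →ₐ[k] C, Ideal.span (𝒢 : Set A) ≤ RingHom.ker χ →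
        ∃! ψ : A →ₐ[k] H ⊗[k] C, IsEquivFamily k H L U σ ψ ∧ evalOne k H ψ = χ)) := by
    classical
  have hφinj : Function.Injective U.φ := aux_phi_injective hH U
  -- Part 1: the ideal `I = span 𝒢` is `G`-stable.
  have hmono : tensSub k L 𝒢 ≤
      tensSub k L ((Ideal.span (𝒢 : Set A)).restrictScalars k) := by
    rintro x ⟨u, rfl⟩
    refine ⟨(TensorProduct.map LinearMap.id
      (Submodule.inclusion (fun v hv => Set.mem_of_mem_of_subset hv Ideal.subset_span :
        𝒢 ≤ (Ideal.span (𝒢 : Set A)).restrictScalars k))) u, ?_⟩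
    rw [map_map_apply, LinearMap.id_comp, Submodule.subtype_comp_inclusion]
  have hmul : ∀ (s t : L ⊗[k] A),
      t ∈ tensSub k L ((Ideal.span (𝒢 : Set A)).restrictScalars k) →
      s * t ∈ tensSub k L ((Ideal.span (𝒢 : Set A)).restrictScalars k) := by
    intro s t ht
    obtain ⟨u, rfl⟩ := ht
    induction u using TensorProduct.induction_on with
    | zero => rw [map_zero, mul_zero]; exact Submodule.zero_mem _
    | add x y hx hy => rw [map_add, mul_add]; exact Submodule.add_mem _ hx hy
    | tmul l w =>
      induction s using TensorProduct.induction_on with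
      | zero => rw [zero_mul]; exact Submodule.zero_mem _
      | add p q hp hq => rw [add_mul]; exact Submodule.add_mem _ hp hq
      | tmul l' a =>
        refine ⟨(l' * l) ⊗ₜ[k] ⟨a * (w : A),
          (Ideal.span (𝒢 : Set A)).mul_mem_left a w.2⟩, ?_⟩
        simp [Algebra.TensorProduct.tmul_mul_tmul]
  have part1 : ∀ a : A, a ∈ Ideal.span (𝒢 : Set A) →
      σ.toLinearMap a ∈ tensSub k L ((Ideal.span (𝒢 : Set A)).restrictScalars k) := by
    intro a ha
    refine Submodule.span_induction
      (p := fun x _ => σ.toLinearMap x ∈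
        tensSub k L ((Ideal.span (𝒢 : Set A)).restrictScalars k)) ?_ ?_ ?_ ?_ ha
    · intro x hx; exact hmono (h𝒢sub x hx)
    · show σ.toLinearMap 0 ∈ _
      rw [map_zero]; exact Submodule.zero_mem _
    · intro x y _ _ hx hy
      show σ.toLinearMap (x + y) ∈ _
      rw [map_add]; exact Submodule.add_mem _ hx hy
    · intro a x _ hx
      show σ.toLinearMap (a • x) ∈ _
      have hs : σ.toLinearMap (a • x) = σ a * σ.toLinearMap x := by
        rw [smul_eq_mul]; exact map_mul σ a x
      rw [hs]; exact hmul _ _ hx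
  refine ⟨part1, ?_⟩
  intro C _ _
  have hcoactC : IsLinCoaction k H (rhoC k H C) := ⟨rhoC_counit, rhoC_coassoc⟩
  -- translation between equivariance and `H`-colinearity:
  have hequiv_colin : ∀ ψ : A →ₐ[k] H ⊗[k] C, IsEquivFamily k H L U σ ψ →
      ∀ v : A, (TensorProduct.map LinearMap.id ψ.toLinearMap) (σ.toLinearMap v) =
        (TensorProduct.map U.φ.toLinearMap LinearMap.id) (rhoC k H C (ψ.toLinearMap v)) :=
    fun ψ hE v => (hE v).symm.trans (N1 U (ψ v))
  have hcolin_equiv : ∀ ψ : A →ₐ[k] H ⊗[k] C,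
      (∀ v : A, (TensorProduct.map LinearMap.id ψ.toLinearMap) (σ.toLinearMap v) =
        (TensorProduct.map U.φ.toLinearMap LinearMap.id) (rhoC k H C (ψ.toLinearMap v))) →
      IsEquivFamily k H L U σ ψ :=
    fun ψ hco a => (N1 U (ψ a)).trans (hco a).symm
  -- evaluation at `1` agrees with `eC`:
  have hEvalEq : ∀ (ψ : A →ₐ[k] H ⊗[k] C) (a : A),
      evalOne k H ψ a = eC k H C (ψ a) := by
    intro ψ a
    show (Algebra.TensorProduct.lid k C).toAlgHom
      ((Algebra.TensorProduct.map (Bialgebra.counitAlgHom k H) (AlgHom.id k C)) (ψ a)) = _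
    rw [algMap_eq]
    rfl
  -- any equivariant family kills `𝒢`:
  have hkill : ∀ ψ : A →ₐ[k] H ⊗[k] C, IsEquivFamily k H L U σ ψ →
      ∀ v ∈ 𝒢, ψ v = 0 := by
    intro ψ hE v hv
    obtain ⟨g, ⟨hg1, hg2⟩, -⟩ :=
      huniv (H ⊗[k] C) (rhoC k H C) hcoactC ψ.toLinearMap (hequiv_colin ψ hE)
    have h1 : ψ v = g (𝒢.mkQ v) := (LinearMap.congr_fun hg2 v).symm
    rw [h1, show 𝒢.mkQ v = 0 from (Submodule.Quotient.mk_eq_zero 𝒢).2 hv, map_zero]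
  constructor
  · -- Part 2
    intro ψ hE
    rw [Ideal.span_le]
    intro v hv
    have h0 : ψ v = 0 := hkill ψ hE v hv
    have h2 : evalOne k H ψ v = 0 := by rw [hEvalEq, h0, map_zero]
    simpa [RingHom.mem_ker] using h2
  · -- Part 3
    intro χ hχ
    have hker𝒢 : 𝒢 ≤ LinearMap.ker χ.toLinearMap := by
      intro v hv
      have hv0 : χ v = 0 := by
        have h3 := hχ (Ideal.subset_span hv)
        rwa [RingHom.mem_ker] at h3
      simpa [LinearMap.mem_ker] using hv0
    set χb : A ⧸ 𝒢 →ₗ[k] C := 𝒢.liftQ χ.toLinearMap hker𝒢 with hχbdef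
    have hχbmk : ∀ a : A, χb (𝒢.mkQ a) = χ a := fun a => by
      rw [hχbdef]; simp
    set ψl : A →ₗ[k] H ⊗[k] C :=
      (TensorProduct.map LinearMap.id χb) ∘ₗ ρW ∘ₗ 𝒢.mkQ with hψldef
    have hψlapp : ∀ a : A, ψl a =
        (TensorProduct.map LinearMap.id χb) (ρW (𝒢.mkQ a)) := fun a => rfl
    have hkey : ∀ a : A, (TensorProduct.map U.φ.toLinearMap LinearMap.id) (ψl a) =
        (TensorProduct.map LinearMap.id χ.toLinearMap) (σ.toLinearMap a) := by
      intro a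
      rw [hψlapp, map_exchange, hcompat a, map_id_fuse, hχbdef, Submodule.liftQ_mkQ]
    set Φ : H ⊗[k] C →ₐ[k] L ⊗[k] C :=
      Algebra.TensorProduct.map U.φ (AlgHom.id k C) with hΦdef
    have hΦeq : ∀ x : H ⊗[k] C,
        Φ x = (TensorProduct.map U.φ.toLinearMap LinearMap.id) x := by
      intro x; rw [hΦdef, algMap_eq]; rfl
    have hΦinj : Function.Injective Φ := by
      intro x y hxy
      have h2 : Function.Injective
          (TensorProduct.map U.φ.toLinearMap (LinearMap.id : C →ₗ[k] C)) :=
        aux_rTensor_inj U.φ.toLinearMap hφinj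
      apply h2
      rw [← hΦeq, ← hΦeq]; exact hxy
    set Θ : A →ₐ[k] L ⊗[k] C :=
      (Algebra.TensorProduct.map (AlgHom.id k L) χ).comp σ with hΘdef
    have hΘeq : ∀ a : A, (TensorProduct.map LinearMap.id χ.toLinearMap)
        (σ.toLinearMap a) = Θ a := by
      intro a
      rw [hΘdef]
      show _ = (Algebra.TensorProduct.map (AlgHom.id k L) χ) (σ a)
      rw [algMap_eq]
      rfl
    have hone : ψl 1 = 1 := by
      apply hΦinj
      rw [hΦeq, hkey, hΘeq, map_one, map_one]
    have hmulψ : ∀ x y : A, ψl (x * y) = ψl x * ψl y := by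
      intro x y
      apply hΦinj
      calc Φ (ψl (x * y)) = Θ (x * y) := by rw [hΦeq, hkey, hΘeq]
        _ = Θ x * Θ y := map_mul Θ x y
        _ = Φ (ψl x) * Φ (ψl y) := by rw [hΦeq, hkey, hΘeq, hΦeq, hkey, hΘeq]
        _ = Φ (ψl x * ψl y) := (map_mul Φ _ _).symm
    set ψ0 : A →ₐ[k] H ⊗[k] C := AlgHom.ofLinearMap ψl hone hmulψ with hψ0def
    have hψ0lin : ψ0.toLinearMap = ψl := AlgHom.toLinearMap_ofLinearMap ψl hone hmulψ
    -- equivariance of `ψ0`: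
    have hcolin0 : ∀ v : A,
        (TensorProduct.map LinearMap.id ψ0.toLinearMap) (σ.toLinearMap v) =
          (TensorProduct.map U.φ.toLinearMap LinearMap.id)
            (rhoC k H C (ψ0.toLinearMap v)) := by
      intro a
      rw [hψ0lin]
      have e0 : rhoC k H C (ψl a) =
          (TensorProduct.assoc k H H C)
            ((TensorProduct.map Coalgebra.comul LinearMap.id)
              ((TensorProduct.map LinearMap.id χb) (ρW (𝒢.mkQ a)))) := rfl
      rw [e0, map_exchange, assoc_nat_right, hρW.2 (𝒢.mkQ a),
        map_id_fuse, map_exchange, hcompat a, map_id_fuse]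
      rw [hψldef, LinearMap.comp_assoc]
    have hequiv0 : IsEquivFamily k H L U σ ψ0 := hcolin_equiv ψ0 hcolin0
    -- evaluation of `ψ0` at `1` is `χ`:
    have heval0 : evalOne k H ψ0 = χ := by
      apply AlgHom.ext
      intro a
      rw [hEvalEq]
      show eC k H C (ψl a) = χ a
      rw [hψlapp]
      show (Algebra.TensorProduct.lid k C).toLinearMap
        ((TensorProduct.map (Bialgebra.counitAlgHom k H).toLinearMap LinearMap.id)
          ((TensorProduct.map LinearMap.id χb) (ρW (𝒢.mkQ a)))) = χ a
      rw [map_exchange, hρW.1 (𝒢.mkQ a), TensorProduct.map_tmul, hχbmk]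
      simp
    -- uniqueness:
    refine ⟨ψ0, ⟨hequiv0, heval0⟩, ?_⟩
    rintro ψ ⟨hE, hEv⟩
    obtain ⟨g, ⟨hg1, hg2⟩, -⟩ :=
      huniv (H ⊗[k] C) (rhoC k H C) hcoactC ψ.toLinearMap (hequiv_colin ψ hE)
    have hgform : ∀ y : A ⧸ 𝒢, g y = (TensorProduct.map LinearMap.id χb) (ρW y) := by
      intro y
      have e1 : g y = (TensorProduct.map LinearMap.id (eC k H C)) (rhoC k H C (g y)) :=
        (eC_rhoC (g y)).symm
      rw [e1, hg1 y, map_id_fuse]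
      have e2 : (eC k H C) ∘ₗ g = χb := by
        apply Submodule.linearMap_qext
        apply LinearMap.ext
        intro a
        have h4 : g (𝒢.mkQ a) = ψ a := LinearMap.congr_fun hg2 a
        show eC k H C (g (𝒢.mkQ a)) = χb (𝒢.mkQ a)
        rw [h4, hχbmk, ← hEvalEq ψ a, hEv]
      rw [e2]
    apply AlgHom.ext
    intro a
    have h5 : ψ a = g (𝒢.mkQ a) := (LinearMap.congr_fun hg2 a).symm
    rw [h5, hgform]
    rfl
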